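/- Monotonicity of the threshold: Let d₁,…,d_c > 0, α₁,…,α_c > 0, β > 0, and d_H² = (β + Σ_{j∈H} α_j)/(Σ_{j∈H} α_j/d_j²) for nonempty H. If i ∈ H and d_i² ≥ d_H², then d_{H∖{i}}² ≤ d_H² (removing an index whose distance exceeds the threshold does not increase the threshold), provided H∖{i} is nonempty. -/

import Mathlib

theorem stmt15 (c : ℕ) (d α : Fin c → ℝ) (β : ℝ)
    (hd : ∀ i, 0 < d i) (hα : ∀ i, 0 < α i) (hβ : 0 < β)
    (H : Finset (Fin c)) (i : Fin c) (hi : i ∈ H) (hne : (H.erase i).Nonempty)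
    (hdi : (d i) ^ 2 ≥ (β + ∑ j ∈ H, α j) / (∑ j ∈ H, α j / (d j) ^ 2)) :
    (β + ∑ j ∈ H.erase i, α j) / (∑ j ∈ H.erase i, α j / (d j) ^ 2) ≤
      (β + ∑ j ∈ H, α j) / (∑ j ∈ H, α j / (d j) ^ 2) := by
  have hdi2 : (0:ℝ) < d i ^ 2 := pow_pos (hd i) 2
  have hS : ∑ j ∈ H, α j = α i + ∑ j ∈ H.erase i, α j :=
    (Finset.add_sum_erase _ _ hi).symm
  have hT : ∑ j ∈ H, α j / d j ^ 2 = α i / d i ^ 2 + ∑ j ∈ H.erase i, α j / d j ^ 2 :=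
    (Finset.add_sum_erase _ (fun j => α j / d j ^ 2) hi).symm
  have hT'pos : (0:ℝ) < ∑ j ∈ H.erase i, α j / d j ^ 2 :=
    Finset.sum_pos (fun j _ => div_pos (hα j) (pow_pos (hd j) 2)) hne
  have hTpos : (0:ℝ) < ∑ j ∈ H, α j / d j ^ 2 := by
    rw [hT]; have h1 := div_pos (hα i) hdi2; linarith
  have hSpos : (0:ℝ) < β + ∑ j ∈ H, α j := by
    have : (0:ℝ) ≤ ∑ j ∈ H, α j := Finset.sum_nonneg fun j _ => (hα j).le
    linarith
  have key : (β + ∑ j ∈ H, α j) / d i ^ 2 ≤ ∑ j ∈ H, α j / d j ^ 2 := by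
    rw [div_le_iff₀ hdi2]
    calc β + ∑ j ∈ H, α j
        = (β + ∑ j ∈ H, α j) / (∑ j ∈ H, α j / d j ^ 2) * (∑ j ∈ H, α j / d j ^ 2) := by
          field_simp
      _ ≤ d i ^ 2 * (∑ j ∈ H, α j / d j ^ 2) := by
          exact mul_le_mul_of_nonneg_right hdi hTpos.le
      _ = (∑ j ∈ H, α j / d j ^ 2) * d i ^ 2 := by ring
  rw [div_le_div_iff₀ hT'pos hTpos]
  have hai : α i / d i ^ 2 * (d i ^ 2) = α i := div_mul_cancel₀ _ hdi2.ne'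
  have key2 : (β + ∑ j ∈ H, α j) * (α i / d i ^ 2) ≤ (∑ j ∈ H, α j / d j ^ 2) * α i := by
    have := mul_le_mul_of_nonneg_right key (hα i).le
    rw [div_mul_eq_mul_div, div_le_iff₀ hdi2] at this
    nlinarith [hα i, hdi2]
  nlinarith [hdi2, hα i]
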